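/- Assume the family (t_n^{(k)}) is equipotentially almost periodic. Let ε > 0, let Γ be a nonempty subset of Γ_ε, and let P ⊆ ⋃_{r∈Γ} P_r(ε) be such that P ∩ P_r(ε) ≠ ∅ for every r ∈ Γ. Then Γ is relatively dense in ℝ if and only if P is relatively dense in ℤ. -/

import Mathlib

open Filter

noncomputable section

/-- A set of reals is relatively dense. -/
def RelDenseR (E : Set ℝ) : Prop :=
  ∃ l : ℝ, 0 < l ∧ ∀ m : ℝ, (E ∩ Set.Icc m (m + l)).Nonempty

/-- A set of integers is relatively dense in `ℤ`. -/
def RelDenseZ (E : Set ℤ) : Prop :=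
  ∃ l : ℤ, 0 < l ∧ ∀ m : ℤ, (E ∩ Set.Icc m (m + l)).Nonempty

/-- Almost periodic (continuous) function on `ℝ`. -/
def APR {E : Type*} [NormedAddCommGroup E] (g : ℝ → E) : Prop :=
  Continuous g ∧ ∀ ε : ℝ, 0 < ε →
    RelDenseR {τ : ℝ | ∀ t : ℝ, ‖g (t + τ) - g t‖ ≤ ε}

/-- Almost periodic sequence on `ℤ`. -/
def APZ {E : Type*} [NormedAddCommGroup E] (x : ℤ → E) : Prop :=
  ∀ ε : ℝ, 0 < ε → RelDenseZ {τ : ℤ | ∀ n : ℤ, ‖x (n + τ) - x n‖ ≤ ε}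

/-- The family `t_n^{(k)} = t_{n+k} - t_n` is equipotentially almost periodic. -/
def EquiAP (ts : ℤ → ℝ) : Prop :=
  ∀ ε : ℝ, 0 < ε → RelDenseZ {T : ℤ | ∀ k n : ℤ,
    |(ts (T + n + k) - ts (T + n)) - (ts (n + k) - ts n)| ≤ ε}

/-- `Γ_ε`: the set of `r ∈ ℝ` with `sup_n |t_n^{(k)} - r| ≤ ε` for some `k`. -/
def GammaSet (ts : ℤ → ℝ) (ε : ℝ) : Set ℝ :=
  {r : ℝ | ∃ k : ℤ, ∀ n : ℤ, |ts (n + k) - ts n - r| ≤ ε}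

/-- `P_r(ε)`: the set of `k ∈ ℤ` with `sup_n |t_n^{(k)} - r| ≤ ε`. -/
def PkSet (ts : ℤ → ℝ) (ε : ℝ) (r : ℝ) : Set ℤ :=
  {k : ℤ | ∀ n : ℤ, |ts (n + k) - ts n - r| ≤ ε}


/-- for `Γ ⊆ Γ_ε` nonempty and `P ⊆ ⋃_{r∈Γ} P_r(ε)` meeting every `P_r(ε)`
with `r ∈ Γ`, the set `Γ` is relatively dense in `ℝ` iff `P` is relatively dense in `ℤ`. -/
theorem gamma_relatively_dense_iff_p_relatively_dense
    (ts : ℤ → ℝ) (hts : StrictMono ts)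
    (htop : Tendsto ts atTop atTop) (hbot : Tendsto ts atBot atBot)
    (hEqui : EquiAP ts)
    (ε : ℝ) (hε : 0 < ε)
    (Γ : Set ℝ) (hΓsub : Γ ⊆ GammaSet ts ε) (hΓne : Γ.Nonempty)
    (P : Set ℤ) (hPsub : P ⊆ ⋃ r ∈ Γ, PkSet ts ε r)
    (hPmeet : ∀ r ∈ Γ, (P ∩ PkSet ts ε r).Nonempty) :
    RelDenseR Γ ↔ RelDenseZ P := by
  classical
  -- translate lemma: every index can be translated into [0, l₀] with error ≤ 1
  obtain ⟨l₀, hl₀, htrans⟩ : ∃ l₀ : ℤ, 0 < l₀ ∧ ∀ n : ℤ, ∃ j : ℤ, 0 ≤ j ∧ j ≤ l₀ ∧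
      ∀ k : ℤ, |(ts (j + k) - ts j) - (ts (n + k) - ts n)| ≤ 1 := by
    obtain ⟨l₀, hl₀, hT⟩ := hEqui 1 one_pos
    refine ⟨l₀, hl₀, fun n => ?_⟩
    obtain ⟨T, hTmem, hT1, hT2⟩ := hT (-n)
    refine ⟨T + n, by omega, by omega, fun k => ?_⟩
    exact hTmem k n
  set M : ℝ := ts (l₀ + 1) - ts 0 + 1 with hMdef
  have hMpos : 0 < M := by
    have := hts (show (0:ℤ) < l₀ + 1 by omega)
    rw [hMdef]; linarith
  -- uniform step bound
  have hstep : ∀ n : ℤ, ts (n + 1) - ts n ≤ M := by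
    intro n
    obtain ⟨j, hj0, hjl, hb⟩ := htrans n
    have h1 := (abs_le.1 (hb 1)).1
    have h2 : ts (j + 1) ≤ ts (l₀ + 1) := hts.monotone (by omega)
    have h3 : ts 0 ≤ ts j := hts.monotone hj0
    rw [hMdef]; linarith
  -- telescoping
  have htel : ∀ n j : ℤ, 0 ≤ j → ts (n + j) - ts n ≤ (j : ℝ) * M := by
    intro n j hj
    refine Int.le_induction (motive := fun j _ => ts (n + j) - ts n ≤ (j : ℝ) * M) ?_ ?_ j hj
    · simp
    · intro j _ ih
      have e : n + (j + 1) = (n + j) + 1 := by ring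
      have h1 := hstep (n + j)
      rw [e]
      push_cast
      rw [add_mul, one_mul]
      linarith
  -- uniform growth
  have hgrow : ∀ D : ℝ, ∃ l : ℤ, 0 < l ∧ ∀ n : ℤ, D < ts (n + l) - ts n := by
    intro D
    obtain ⟨l, hl1, hl2⟩ :=
      ((htop.eventually (eventually_gt_atTop (ts l₀ + 1 + D))).and (eventually_gt_atTop 0)).exists
    refine ⟨l, hl2, fun n => ?_⟩
    obtain ⟨j, hj0, hjl, hb⟩ := htrans n
    have h1 := (abs_le.1 (hb l)).2
    have h2 : ts l ≤ ts (j + l) := hts.monotone (by omega)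
    have h3 : ts j ≤ ts l₀ := hts.monotone hjl
    linarith
  -- hitting any level within M
  have hhit : ∀ x : ℝ, ∃ n : ℤ, x ≤ ts n ∧ ts n ≤ x + M := by
    intro x
    have hne : ∃ n : ℤ, x ≤ ts n := (htop.eventually (eventually_ge_atTop x)).exists
    have hbdd : ∃ b : ℤ, ∀ z : ℤ, x ≤ ts z → b ≤ z := by
      obtain ⟨b, hb⟩ := eventually_atBot.1 (hbot.eventually (eventually_lt_atBot x))
      refine ⟨b + 1, fun z hz => ?_⟩
      by_contra h
      push_neg at h
      exact absurd hz (not_le.2 (hb z (by omega)))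
    obtain ⟨n, hn, hmin⟩ := Int.exists_least_of_bdd (P := fun z => x ≤ ts z) hbdd hne
    refine ⟨n, hn, ?_⟩
    have h1 : ¬ x ≤ ts (n - 1) := fun h => by have := hmin _ h; omega
    have h2 := hstep (n - 1)
    rw [show n - 1 + 1 = n by ring] at h2
    push_neg at h1
    linarith
  constructor
  · rintro ⟨L, hLpos, hLdense⟩
    obtain ⟨l, hlpos, hlgrow⟩ := hgrow (L + 2 * ε)
    refine ⟨l, hlpos, fun m => ?_⟩
    obtain ⟨r, hrΓ, hr1, hr2⟩ := hLdense (ts m - ts 0 + ε)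
    obtain ⟨k, hkP, hkPr⟩ := hPmeet r hrΓ
    have hk0 : |ts (0 + k) - ts 0 - r| ≤ ε := hkPr 0
    rw [zero_add] at hk0
    have hka := abs_le.1 hk0
    have h1 : ts m ≤ ts k := by linarith [hka.1]
    have h2 : ts k < ts (m + l) := by
      have := hlgrow m
      linarith [hka.2]
    exact ⟨k, hkP, hts.le_iff_le.1 h1, (hts.lt_iff_lt.1 h2).le⟩
  · rintro ⟨l, hlpos, hldense⟩
    have hlR : (0:ℝ) < (l : ℝ) := by exact_mod_cast hlpos
    refine ⟨2 * ε + ((l : ℝ) + 1) * M, by nlinarith, fun x => ?_⟩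
    obtain ⟨n, hn1, hn2⟩ := hhit (ts 0 + x + ε)
    obtain ⟨k, hkP, hk1, hk2⟩ := hldense n
    obtain ⟨r, hrΓ, hkPr⟩ : ∃ r ∈ Γ, k ∈ PkSet ts ε r := by
      have h := hPsub hkP
      simpa using h
    have hk0 : |ts (0 + k) - ts 0 - r| ≤ ε := hkPr 0
    rw [zero_add] at hk0
    have hka := abs_le.1 hk0
    have htel' := htel n l hlpos.le
    have hmono : ts k ≤ ts (n + l) := hts.monotone hk2
    have hmono2 : ts n ≤ ts k := hts.monotone hk1
    refine ⟨r, hrΓ, ?_, ?_⟩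
    · linarith [hka.1]
    · have e : ((l : ℝ) + 1) * M = (l : ℝ) * M + M := by ring
      rw [e]
      linarith [hka.2]
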